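/- Let n ≥ 1, let Z_1, …, Z_{n+1} be random variables taking values in a measurable space 𝒵 whose joint law is invariant under every permutation of the n+1 coordinates, let M : 𝒵^n × 𝒵 → ℝ be a measurable function invariant under permutations of its first argument, define μ_j = M((Z_i)_{i ≠ j}, Z_j) and pl = (n+1)^{-1} Σ_{i=1}^{n+1} 1{μ_i ≥ μ_{n+1}}, and assume that almost surely the scores μ_1, …, μ_{n+1} are pairwise distinct. If α ∈ (0,1) is such that (n+1)α is an integer, then P( pl ≤ (n+1)^{-1}⌊(n+1)α⌋ ) = α. -/

import Mathlib

open MeasureTheory Finset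
open scoped ENNReal

lemma exists_perm_comp {n m : ℕ} (e₁ e₂ : Fin n → Fin m) (h₁ : Function.Injective e₁)
    (h₂ : Function.Injective e₂) (hr : Set.range e₁ = Set.range e₂) :
    ∃ τ : Equiv.Perm (Fin n), e₂ ∘ τ = e₁ := by
  rcases Nat.eq_zero_or_pos n with rfl | hp
  · exact ⟨Equiv.refl _, funext fun i => absurd i.2 (by omega)⟩
  haveI : Nonempty (Fin n) := ⟨⟨0, hp⟩⟩
  refine ⟨(Equiv.ofInjective e₁ h₁).trans ((Equiv.setCongr hr).trans
    (Equiv.ofInjective e₂ h₂).symm), ?_⟩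
  funext i
  simp only [Equiv.ofInjective, Equiv.setCongr, Equiv.trans_apply, Equiv.subtypeEquivProp,
    Equiv.ofLeftInverse, Equiv.coe_fn_mk, Equiv.coe_fn_symm_mk, Equiv.subtypeEquiv]
  show e₂ (Function.invFun e₂ (e₁ i)) = e₁ i
  exact Function.invFun_eq (by rw [show (∃ a, e₂ a = e₁ i) = (e₁ i ∈ Set.range e₂) from rfl, ← hr]; exact Set.mem_range_self i)

def scoreFun {𝒵 : Type*} {n : ℕ} (M : (Fin n → 𝒵) → 𝒵 → ℝ) (z : Fin (n+1) → 𝒵)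
    (j : Fin (n+1)) : ℝ := M (fun i => z (j.succAbove i)) (z j)

lemma scoreFun_comp_perm {𝒵 : Type*} {n : ℕ} (M : (Fin n → 𝒵) → 𝒵 → ℝ)
    (hMinv : ∀ (σ : Equiv.Perm (Fin n)) (b : Fin n → 𝒵) (z : 𝒵), M (b ∘ σ) z = M b z)
    (σ : Equiv.Perm (Fin (n+1))) (z : Fin (n+1) → 𝒵) :
    scoreFun M (z ∘ σ) = (scoreFun M z) ∘ σ := by
  funext j
  have h₁ : Function.Injective (fun i => σ (j.succAbove i)) :=
    σ.injective.comp (Fin.succAbove_right_injective)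
  have h₂ : Function.Injective ((σ j).succAbove) := Fin.succAbove_right_injective
  have hr : Set.range (fun i => σ (j.succAbove i)) = Set.range ((σ j).succAbove) := by
    have : Set.range (fun i => σ (j.succAbove i)) = σ '' (Set.range (j.succAbove)) := by
      rw [← Set.range_comp]; rfl
    rw [this, Fin.range_succAbove, Fin.range_succAbove]
    ext x
    simp only [Set.mem_image, Set.mem_compl_iff, Set.mem_singleton_iff]
    constructor
    · rintro ⟨y, hy, rfl⟩; exact fun h => hy (σ.injective h)
    · intro hx; exact ⟨σ.symm x, fun h => hx (by rw [← h]; simp), by simp⟩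
  obtain ⟨τ, hτ⟩ := exists_perm_comp _ _ h₁ h₂ hr
  show M (fun i => z (σ (j.succAbove i))) (z (σ j)) = M (fun i => z ((σ j).succAbove i)) (z (σ j))
  have : (fun i => z (σ (j.succAbove i))) = (fun i => z ((σ j).succAbove i)) ∘ τ := by
    funext i
    simp only [Function.comp_apply]
    rw [← congrFun hτ i]; rfl
  rw [this, hMinv]

lemma count_rank_le {n k : ℕ} (hk : k ≤ n + 1) (v : Fin (n+1) → ℝ)
    (hinj : Function.Injective v) :
    (univ.filter (fun j : Fin (n+1) =>
      (univ.filter (fun i => v j ≤ v i)).card ≤ k)).card = k := by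
  classical
  set f : Fin (n+1) → ℕ := fun j => (univ.filter (fun i => v j ≤ v i)).card with hf
  have hmono : ∀ a b, v a < v b → f b < f a := by
    intro a b hab
    apply Finset.card_lt_card
    constructor
    · refine Finset.monotone_filter_right _ ?_
      intro i _ hi
      exact le_trans hab.le hi
    · intro hsub
      have ha : a ∈ univ.filter (fun i => v a ≤ v i) := by simp
      have := hsub ha
      simp only [Finset.mem_filter] at this
      exact absurd this.2 (not_le.mpr hab)
  have hinj' : Function.Injective f := by
    intro a b hab
    by_contra hne
    rcases (hinj.ne hne).lt_or_gt with h | h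
    · exact absurd hab (by have := hmono a b h; omega)
    · exact absurd hab (by have := hmono b a h; omega)
  have hmem : ∀ j, f j ∈ Finset.Icc 1 (n+1) := by
    intro j
    rw [Finset.mem_Icc]
    constructor
    · refine Nat.one_le_iff_ne_zero.mpr (fun h0 => ?_)
      have : j ∈ univ.filter (fun i => v j ≤ v i) := by simp
      rw [Finset.card_eq_zero.mp h0] at this
      exact absurd this (Finset.notMem_empty j)
    · calc f j ≤ univ.card := Finset.card_filter_le _ _
        _ = n + 1 := by simp
  have himg : univ.image f = Finset.Icc 1 (n+1) := by
    apply Finset.eq_of_subset_of_card_le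
    · intro x hx
      obtain ⟨j, _, rfl⟩ := Finset.mem_image.mp hx
      exact hmem j
    · rw [Finset.card_image_of_injective _ hinj']
      simp [Nat.card_Icc]
  calc (univ.filter (fun j => f j ≤ k)).card
      = ((univ.filter (fun j => f j ≤ k)).image f).card :=
        (Finset.card_image_of_injective _ hinj').symm
    _ = ((univ.image f).filter (· ≤ k)).card := by rw [Finset.filter_image]
    _ = ((Finset.Icc 1 (n+1)).filter (· ≤ k)).card := by rw [himg]
    _ = (Finset.Icc 1 k).card := by
        congr 1; ext x; simp only [Finset.mem_filter, Finset.mem_Icc]; omega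
    _ = k := by rw [Nat.card_Icc]; omega

lemma scoreFun_measurable {𝒵 : Type*} [MeasurableSpace 𝒵] {n : ℕ}
    (M : (Fin n → 𝒵) → 𝒵 → ℝ) (hM : Measurable (Function.uncurry M)) :
    Measurable (scoreFun M) := by
  apply measurable_pi_lambda
  intro j
  have : (fun z : Fin (n+1) → 𝒵 => scoreFun M z j)
      = (Function.uncurry M) ∘ (fun z => ((fun i => z (j.succAbove i)), z j)) := rfl
  rw [this]
  exact hM.comp ((measurable_pi_lambda _ (fun i => measurable_pi_apply _)).prodMk
    (measurable_pi_apply _))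

/-- exactness in Theorem 1 of the paper. Under exchangeability, with a
permutation-invariant measurable nonconformity measure, scores that are almost surely
pairwise distinct, and `(n+1)α` being an integer, `P(pl ≤ ⌊(n+1)α⌋/(n+1)) = α`. -/
theorem conformal_finite_sample_exactness {Ω 𝒵 : Type*} [MeasurableSpace Ω]
    [MeasurableSpace 𝒵] (ℙ : Measure Ω) [IsProbabilityMeasure ℙ]
    (n : ℕ) (hn : 1 ≤ n) (α : ℝ) (hα : α ∈ Set.Ioo (0 : ℝ) 1)
    (Z : Ω → Fin (n + 1) → 𝒵) (hZ : Measurable Z)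
    (hexch : ∀ σ : Equiv.Perm (Fin (n + 1)),
      Measure.map (fun ω => Z ω ∘ σ) ℙ = Measure.map Z ℙ)
    (M : (Fin n → 𝒵) → 𝒵 → ℝ) (hM : Measurable (Function.uncurry M))
    (hMinv : ∀ (σ : Equiv.Perm (Fin n)) (b : Fin n → 𝒵) (z : 𝒵), M (b ∘ σ) z = M b z)
    (μ : Ω → Fin (n + 1) → ℝ)
    (hμdef : ∀ ω j, μ ω j = M (fun i => Z ω (j.succAbove i)) (Z ω j))
    (hdist : ∀ᵐ ω ∂ℙ, Function.Injective (μ ω))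
    (pl : Ω → ℝ)
    (hpl : ∀ ω, pl ω =
      ((univ.filter (fun i : Fin (n + 1) => μ ω (Fin.last n) ≤ μ ω i)).card : ℝ) / (n + 1))
    (hint : ∃ m : ℤ, ((n : ℝ) + 1) * α = m) :
    ℙ {ω | pl ω ≤ (⌊((n : ℝ) + 1) * α⌋ : ℝ) / (n + 1)} = ENNReal.ofReal α := by
  classical
  obtain ⟨m, hm⟩ := hint
  obtain ⟨hα0, hα1⟩ := hα
  have hnpos : (0:ℝ) < (n:ℝ) + 1 := by positivity
  have hm1 : 1 ≤ m := by
    have h1 : (0:ℝ) < m := hm ▸ mul_pos hnpos hα0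
    exact_mod_cast h1
  have hmn : m ≤ n := by
    have h1 : (m:ℝ) < (n:ℝ) + 1 := by
      rw [← hm]
      nlinarith
    have : m < (n:ℤ) + 1 := by exact_mod_cast h1
    omega
  set k : ℕ := m.toNat with hk
  have hkm : (k : ℤ) = m := Int.toNat_of_nonneg (by omega)
  have hkR : ((n:ℝ)+1) * α = k := by
    rw [hm]; exact_mod_cast (congrArg (fun x : ℤ => (x : ℝ)) hkm).symm
  have hk1 : 1 ≤ k := by omega
  have hkn : k ≤ n := by omega
  have hfloor : (⌊((n : ℝ) + 1) * α⌋ : ℝ) = (k : ℝ) := by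
    rw [hm, Int.floor_intCast, ← hkm]; norm_num
  have hμZ : μ = fun ω => scoreFun M (Z ω) := funext fun ω => funext fun j => hμdef ω j
  have hG : Measurable (scoreFun (n := n) M) := scoreFun_measurable M hM
  have hμ : Measurable μ := by rw [hμZ]; exact hG.comp hZ
  set N : Ω → Fin (n+1) → ℕ := fun ω j => (univ.filter (fun i => μ ω j ≤ μ ω i)).card with hN
  set S : Fin (n+1) → Set (Fin (n+1) → ℝ) :=
    fun j => {v | (univ.filter (fun i => v j ≤ v i)).card ≤ k} with hS
  have hSmeas : ∀ j, MeasurableSet (S j) := by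
    intro j
    have hc : Measurable (fun v : Fin (n+1) → ℝ =>
        (univ.filter (fun i => v j ≤ v i)).card) := by
      have he : (fun v : Fin (n+1) → ℝ => (univ.filter (fun i => v j ≤ v i)).card)
          = fun v => ∑ i : Fin (n+1), if v j ≤ v i then 1 else 0 := by
        funext v
        rw [Finset.card_filter]
      rw [he]
      apply Finset.measurable_sum
      intro i _
      exact Measurable.ite (measurableSet_le (measurable_pi_apply j) (measurable_pi_apply i))
        measurable_const measurable_const
    have hSj : S j = (fun v : Fin (n+1) → ℝ =>
        (univ.filter (fun i => v j ≤ v i)).card) ⁻¹' {x | x ≤ k} := rfl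
    rw [hSj]
    exact hc MeasurableSpace.measurableSet_top
  have hA : ∀ j, {ω | N ω j ≤ k} = μ ⁻¹' (S j) := fun j => rfl
  have hAmeas : ∀ j, MeasurableSet {ω | N ω j ≤ k} := fun j => by
    rw [hA]; exact hμ (hSmeas j)
  -- exchangeability of the scores
  have hμexch : ∀ σ : Equiv.Perm (Fin (n+1)),
      Measure.map (fun ω => μ ω ∘ σ) ℙ = Measure.map μ ℙ := by
    intro σ
    have hpre : Measurable (fun ω => Z ω ∘ σ) :=
      measurable_pi_lambda _ (fun i => (measurable_pi_apply _).comp hZ)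
    have h1 : (fun ω => μ ω ∘ σ) = scoreFun M ∘ (fun ω => Z ω ∘ σ) := by
      funext ω
      rw [hμZ]
      exact (scoreFun_comp_perm M hMinv σ (Z ω)).symm
    rw [h1, ← Measure.map_map hG hpre, hexch σ, Measure.map_map hG hZ, hμZ]
    rfl
  -- all coordinates have the same rank probability
  have hsame : ∀ j, ℙ {ω | N ω j ≤ k} = ℙ {ω | N ω (Fin.last n) ≤ k} := by
    intro j
    set σ : Equiv.Perm (Fin (n+1)) := Equiv.swap j (Fin.last n) with hσ
    have hprecomp : Measurable (fun v : Fin (n+1) → ℝ => v ∘ σ) :=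
      measurable_pi_lambda _ (fun i => measurable_pi_apply _)
    have hset : (fun v : Fin (n+1) → ℝ => v ∘ σ) ⁻¹' (S (Fin.last n)) = S j := by
      ext v
      simp only [hS, Set.mem_preimage, Set.mem_setOf_eq, Function.comp_apply]
      have hσl : σ (Fin.last n) = j := Equiv.swap_apply_right _ _
      have hcard : (univ.filter (fun i => v (σ (Fin.last n)) ≤ v (σ i))).card
           = (univ.filter (fun i => v j ≤ v i)).card := by
        rw [hσl]
        apply Finset.card_equiv σ
        intro i
        simp
      rw [hcard]
    calc ℙ {ω | N ω j ≤ k} = ℙ ((fun ω => μ ω ∘ σ) ⁻¹' (S (Fin.last n))) := by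
          rw [hA j, ← hset]; rfl
      _ = Measure.map (fun ω => μ ω ∘ σ) ℙ (S (Fin.last n)) :=
          (Measure.map_apply (hprecomp.comp hμ) (hSmeas _)).symm
      _ = Measure.map μ ℙ (S (Fin.last n)) := by rw [hμexch σ]
      _ = ℙ {ω | N ω (Fin.last n) ≤ k} := by rw [Measure.map_apply hμ (hSmeas _), hA]
  -- sum of indicators equals k a.e.
  have hcount : ∀ᵐ ω ∂ℙ,
      (∑ j : Fin (n+1), Set.indicator {ω' | N ω' j ≤ k} (1 : Ω → ℝ≥0∞) ω) = (k : ℝ≥0∞) := by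
    filter_upwards [hdist] with ω hinj
    have h1 : ∀ j : Fin (n+1), Set.indicator {ω' | N ω' j ≤ k} (1 : Ω → ℝ≥0∞) ω
        = if N ω j ≤ k then 1 else 0 := by
      intro j
      rw [Set.indicator_apply]
      simp [Set.mem_setOf_eq]
    calc (∑ j : Fin (n+1), Set.indicator {ω' | N ω' j ≤ k} (1 : Ω → ℝ≥0∞) ω)
        = ∑ j : Fin (n+1), if N ω j ≤ k then (1:ℝ≥0∞) else 0 := by
          exact Finset.sum_congr rfl (fun j _ => h1 j)
      _ = ((univ.filter (fun j : Fin (n+1) => N ω j ≤ k)).card : ℝ≥0∞) := by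
          rw [Finset.sum_boole]
      _ = (k : ℝ≥0∞) := by
          rw [count_rank_le (by omega) (μ ω) hinj]
  -- sum of probabilities
  have hsum : ∑ j : Fin (n+1), ℙ {ω | N ω j ≤ k} = (k : ℝ≥0∞) := by
    have h1 : ∀ j : Fin (n+1), ℙ {ω | N ω j ≤ k}
        = ∫⁻ ω, Set.indicator {ω' | N ω' j ≤ k} (1 : Ω → ℝ≥0∞) ω ∂ℙ :=
      fun j => (lintegral_indicator_one (hAmeas j)).symm
    calc ∑ j : Fin (n+1), ℙ {ω | N ω j ≤ k}
        = ∑ j : Fin (n+1), ∫⁻ ω, Set.indicator {ω' | N ω' j ≤ k} (1 : Ω → ℝ≥0∞) ω ∂ℙ :=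
          Finset.sum_congr rfl (fun j _ => h1 j)
      _ = ∫⁻ ω, ∑ j : Fin (n+1), Set.indicator {ω' | N ω' j ≤ k} (1 : Ω → ℝ≥0∞) ω ∂ℙ :=
          (lintegral_finset_sum _ (fun j _ => measurable_const.indicator (hAmeas j))).symm
      _ = ∫⁻ _, (k : ℝ≥0∞) ∂ℙ := lintegral_congr_ae hcount
      _ = (k : ℝ≥0∞) := by simp
  have hconst : (((n:ℝ≥0∞)+1)) * ℙ {ω | N ω (Fin.last n) ≤ k} = (k : ℝ≥0∞) := by
    rw [← hsum]
    rw [Finset.sum_congr rfl (fun j _ => hsame j), Finset.sum_const]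
    simp [Finset.card_univ, nsmul_eq_mul]
  have hlast : ℙ {ω | N ω (Fin.last n) ≤ k} = (k : ℝ≥0∞) / ((n:ℝ≥0∞)+1) := by
    have h0 : ((n:ℝ≥0∞)+1) ≠ 0 := by simp
    have ht : ((n:ℝ≥0∞)+1) ≠ ⊤ :=
      ENNReal.add_ne_top.mpr ⟨ENNReal.natCast_ne_top n, ENNReal.one_ne_top⟩
    exact (ENNReal.eq_div_iff h0 ht).mpr hconst
  -- identify the target set
  have hsetid : {ω | pl ω ≤ (⌊((n : ℝ) + 1) * α⌋ : ℝ) / (n + 1)} = {ω | N ω (Fin.last n) ≤ k} := by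
    ext ω
    simp only [Set.mem_setOf_eq]
    rw [hpl, hfloor]
    rw [div_le_div_iff_of_pos_right hnpos]
    exact_mod_cast Iff.rfl
  rw [hsetid, hlast]
  -- ENNReal.ofReal α = k / (n+1)
  have : ENNReal.ofReal α = (k : ℝ≥0∞) / ((n:ℝ≥0∞)+1) := by
    have hαeq : α = (k : ℝ) / ((n:ℝ)+1) := by
      field_simp at hkR ⊢
      linarith [hkR]
    rw [hαeq, ENNReal.ofReal_div_of_pos hnpos]
    congr 1
    · exact ENNReal.ofReal_natCast k
    · rw [show ((n:ℝ)+1) = ((n+1 : ℕ) : ℝ) by push_cast; ring, ENNReal.ofReal_natCast]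
      push_cast; ring
  rw [this]
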